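/- For λ′, λ″ ∈ ℂ with Im λ′ > 0 and Im λ″ > 0, define M(λ′, λ″) = Ran((Γ(A + λ′)^{-1})*) ∪ Ran((Γ_*(A* − λ″)^{-1})*) ⊆ H. Then the closed subspace closure[ span{ (A − μ)^{-1}x : Im μ < 0, x ∈ M(λ′, λ″) } + span{ (A* − λ)^{-1}x : Im λ > 0, x ∈ M(λ′, λ″) } ] is independent of the choice of λ′ and λ″; in particular it equals the same subspace formed with λ′ = λ″ = i. -/

import Mathlib

open scoped ComplexInnerProductSpace

noncomputable section

/-- A maximal dissipative operator on a complex Hilbert space `H`, together with the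
(derivable) data of its resolvent on the open lower half-plane and the resolvent of its
adjoint on the open upper half-plane.  Here the inner product `⟪·,·⟫` is conjugate-linear
in the first variable, so that the paper's `⟨x, y⟩` corresponds to `⟪y, x⟫`. -/
structure MDO (H : Type*) [NormedAddCommGroup H] [InnerProductSpace ℂ H]
    [CompleteSpace H] where
  /-- The underlying densely defined operator. -/
  A : H →ₗ.[ℂ] H
  dense_dom : Dense (A.domain : Set H)
  dissipative : ∀ u : A.domain, 0 ≤ (⟪(u : H), A u⟫).im
  /-- `R z` is the bounded inverse `(A - z)⁻¹`, for `Im z < 0`. -/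
  R : ℂ → H →L[ℂ] H
  R_mem : ∀ z, z.im < 0 → ∀ h : H, R z h ∈ A.domain
  R_right : ∀ z (hz : z.im < 0) (h : H), A ⟨R z h, R_mem z hz h⟩ - z • R z h = h
  R_left : ∀ z, z.im < 0 → ∀ u : A.domain, R z (A u - z • (u : H)) = (u : H)
  dense_dom_star : Dense (A.adjoint.domain : Set H)
  anti_dissipative_star : ∀ u : A.adjoint.domain, (⟪(u : H), A.adjoint u⟫).im ≤ 0
  /-- `Rs z` is the bounded inverse `(A* - z)⁻¹`, for `Im z > 0`. -/
  Rs : ℂ → H →L[ℂ] H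
  Rs_mem : ∀ z, 0 < z.im → ∀ h : H, Rs z h ∈ A.adjoint.domain
  Rs_right : ∀ z (hz : 0 < z.im) (h : H),
    A.adjoint ⟨Rs z h, Rs_mem z hz h⟩ - z • Rs z h = h
  Rs_left : ∀ z, 0 < z.im → ∀ u : A.adjoint.domain,
    Rs z (A.adjoint u - z • (u : H)) = (u : H)

/-- A maximal dissipative operator together with boundary operators `Γ`, `Γ_*` satisfying
the abstract Lagrange identities, and the bounded compositions `ΓR z = Γ ∘ (A - z)⁻¹`
(for `Im z < 0`) and `ΓsRs z = Γ_* ∘ (A* - z)⁻¹` (for `Im z > 0`). -/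
structure StrausSetting (H E Es : Type*)
    [NormedAddCommGroup H] [InnerProductSpace ℂ H] [CompleteSpace H]
    [NormedAddCommGroup E] [InnerProductSpace ℂ E] [CompleteSpace E]
    [NormedAddCommGroup Es] [InnerProductSpace ℂ Es] [CompleteSpace Es]
    extends MDO H where
  Γ : A.domain →ₗ[ℂ] E
  Γ_bdd : ∃ C : ℝ, ∀ u : A.domain, ‖Γ u‖ ≤ C * (‖(u : H)‖ + ‖A u‖)
  Γ_dense : DenseRange Γ
  lagrange : ∀ u v : A.domain,
    ⟪(v : H), A u⟫ - ⟪A v, (u : H)⟫ = Complex.I * ⟪Γ v, Γ u⟫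
  Γs : A.adjoint.domain →ₗ[ℂ] Es
  Γs_bdd : ∃ C : ℝ, ∀ u : A.adjoint.domain,
    ‖Γs u‖ ≤ C * (‖(u : H)‖ + ‖A.adjoint u‖)
  Γs_dense : DenseRange Γs
  lagrange_star : ∀ u v : A.adjoint.domain,
    ⟪(v : H), A.adjoint u⟫ - ⟪A.adjoint v, (u : H)⟫ = -Complex.I * ⟪Γs v, Γs u⟫
  /-- `ΓR z = Γ ∘ (A - z)⁻¹` as a bounded operator `H →L[ℂ] E`, for `Im z < 0`. -/
  ΓR : ℂ → H →L[ℂ] E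
  ΓR_spec : ∀ z (hz : z.im < 0) (h : H), ΓR z h = Γ ⟨R z h, R_mem z hz h⟩
  /-- `ΓsRs z = Γ_* ∘ (A* - z)⁻¹` as a bounded operator `H →L[ℂ] Es`, for `Im z > 0`. -/
  ΓsRs : ℂ → H →L[ℂ] Es
  ΓsRs_spec : ∀ z (hz : 0 < z.im) (h : H), ΓsRs z h = Γs ⟨Rs z h, Rs_mem z hz h⟩

variable {H E Es : Type*}
    [NormedAddCommGroup H] [InnerProductSpace ℂ H] [CompleteSpace H]
    [NormedAddCommGroup E] [InnerProductSpace ℂ E] [CompleteSpace E]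
    [NormedAddCommGroup Es] [InnerProductSpace ℂ Es] [CompleteSpace Es]

namespace StrausSetting
variable (M : StrausSetting H E Es)

/-- resolvent identity for R -/
theorem res_R {z w : ℂ} (hz : z.im < 0) (hw : w.im < 0) (h : H) :
    M.R z h - M.R w h = (z - w) • M.R z (M.R w h) := by
  have hu := M.R_left z hz ⟨M.R w h, M.R_mem w hw h⟩
  have hr := M.R_right w hw h
  set u : M.A.domain := ⟨M.R w h, M.R_mem w hw h⟩ with hudef
  have hAu : M.A u = h + w • M.R w h := by
    have : M.A u - w • M.R w h = h := hr
    linear_combination (norm := module) this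
  rw [hAu] at hu
  have : M.R z (h + (w - z) • M.R w h) = M.R w h := by
    convert hu using 2
    simp only [hudef]
    module
  rw [map_add, map_smul] at this
  linear_combination (norm := module) this

theorem res_Rs {z w : ℂ} (hz : 0 < z.im) (hw : 0 < w.im) (h : H) :
    M.Rs z h - M.Rs w h = (z - w) • M.Rs z (M.Rs w h) := by
  have hu := M.Rs_left z hz ⟨M.Rs w h, M.Rs_mem w hw h⟩
  have hr := M.Rs_right w hw h
  set u : M.A.adjoint.domain := ⟨M.Rs w h, M.Rs_mem w hw h⟩ with hudef
  have hAu : M.A.adjoint u = h + w • M.Rs w h := by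
    linear_combination (norm := module) hr
  rw [hAu] at hu
  have : M.Rs z (h + (w - z) • M.Rs w h) = M.Rs w h := by
    convert hu using 2
    simp only [hudef]
    module
  rw [map_add, map_smul] at this
  linear_combination (norm := module) this


open ContinuousLinearMap in
theorem R_adj {z : ℂ} (hz : z.im < 0) :
    ContinuousLinearMap.adjoint (M.R z) = M.Rs (starRingEnd ℂ z) := by
  have hzc : 0 < (starRingEnd ℂ z).im := by simpa using hz
  symm
  rw [ContinuousLinearMap.eq_adjoint_iff]
  intro k h
  set u : M.A.domain := ⟨M.R z h, M.R_mem z hz h⟩ with hudef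
  set v : M.A.adjoint.domain := ⟨M.Rs (starRingEnd ℂ z) k, M.Rs_mem _ hzc k⟩ with hvdef
  have pair : ⟪M.A.adjoint v, (u:H)⟫ = ⟪(v:H), M.A u⟫ :=
    M.A.adjoint_isFormalAdjoint M.dense_dom v u
  have hAu : M.A u = h + z • M.R z h := by
    linear_combination (norm := module) M.R_right z hz h
  have hAv : M.A.adjoint v = k + (starRingEnd ℂ z) • M.Rs (starRingEnd ℂ z) k := by
    linear_combination (norm := module) M.Rs_right _ hzc k
  rw [hAu, hAv] at pair
  have hu : (u : H) = M.R z h := rfl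
  have hv : (v : H) = M.Rs (starRingEnd ℂ z) k := rfl
  rw [hu, hv] at pair
  rw [inner_add_left, inner_add_right, inner_smul_left, inner_smul_right,
    Complex.conj_conj] at pair
  -- pair : ⟪k, R z h⟫ + z * ⟪Rs z̄ k, R z h⟫ = ⟪Rs z̄ k, h⟫ + z * ⟪Rs z̄ k, R z h⟫
  linear_combination -pair

theorem Rs_adj {z : ℂ} (hz : 0 < z.im) :
    ContinuousLinearMap.adjoint (M.Rs z) = M.R (starRingEnd ℂ z) := by
  have h1 : ((starRingEnd ℂ) z).im < 0 := by simpa using hz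
  have := M.R_adj h1
  rw [Complex.conj_conj] at this
  rw [← this, ContinuousLinearMap.adjoint_adjoint]


theorem GR_rel {z z' : ℂ} (hz : z.im < 0) (hz' : z'.im < 0) (h : H) :
    M.ΓR z h = M.ΓR z' (h + (z - z') • M.R z h) := by
  rw [M.ΓR_spec z hz h, M.ΓR_spec z' hz' _]
  congr 1
  apply Subtype.ext
  have := M.res_R hz' hz h
  show M.R z h = M.R z' (h + (z - z') • M.R z h)
  rw [map_add, map_smul]
  linear_combination (norm := module) -this

theorem GsRs_rel {w w' : ℂ} (hw : 0 < w.im) (hw' : 0 < w'.im) (h : H) :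
    M.ΓsRs w h = M.ΓsRs w' (h + (w - w') • M.Rs w h) := by
  rw [M.ΓsRs_spec w hw h, M.ΓsRs_spec w' hw' _]
  congr 1
  apply Subtype.ext
  have := M.res_Rs hw' hw h
  show M.Rs w h = M.Rs w' (h + (w - w') • M.Rs w h)
  rw [map_add, map_smul]
  linear_combination (norm := module) -this

theorem GR_adj_rel {z z' : ℂ} (hz : z.im < 0) (hz' : z'.im < 0) (e : E) :
    ContinuousLinearMap.adjoint (M.ΓR z) e =
      ContinuousLinearMap.adjoint (M.ΓR z') e
        + (starRingEnd ℂ (z - z')) •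
          M.Rs (starRingEnd ℂ z) (ContinuousLinearMap.adjoint (M.ΓR z') e) := by
  apply ext_inner_right ℂ
  intro h
  rw [ContinuousLinearMap.adjoint_inner_left, inner_add_left, inner_smul_left,
    Complex.conj_conj, ContinuousLinearMap.adjoint_inner_left]
  have hRs : ∀ y : H, ⟪M.Rs (starRingEnd ℂ z) y, h⟫ = ⟪y, M.R z h⟫ := by
    intro y
    rw [← M.R_adj hz, ContinuousLinearMap.adjoint_inner_left]
  rw [hRs, ContinuousLinearMap.adjoint_inner_left]
  rw [M.GR_rel hz hz' h, map_add, map_smul, inner_add_right, inner_smul_right]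

theorem GsRs_adj_rel {w w' : ℂ} (hw : 0 < w.im) (hw' : 0 < w'.im) (f : Es) :
    ContinuousLinearMap.adjoint (M.ΓsRs w) f =
      ContinuousLinearMap.adjoint (M.ΓsRs w') f
        + (starRingEnd ℂ (w - w')) •
          M.R (starRingEnd ℂ w) (ContinuousLinearMap.adjoint (M.ΓsRs w') f) := by
  apply ext_inner_right ℂ
  intro h
  rw [ContinuousLinearMap.adjoint_inner_left, inner_add_left, inner_smul_left,
    Complex.conj_conj, ContinuousLinearMap.adjoint_inner_left]
  have hR : ∀ y : H, ⟪M.R (starRingEnd ℂ w) y, h⟫ = ⟪y, M.Rs w h⟫ := by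
    intro y
    rw [← M.Rs_adj hw, ContinuousLinearMap.adjoint_inner_left]
  rw [hR, ContinuousLinearMap.adjoint_inner_left]
  rw [M.GsRs_rel hw hw' h, map_add, map_smul, inner_add_right, inner_smul_right]


/-- Cross identity from the Lagrange identity for `Γs`. -/
theorem cross_B {σ ν : ℂ} (hσ : σ.im < 0) (hν : 0 < ν.im) (h : H) :
    (ν - σ) • M.R σ (M.Rs ν h) =
      (-Complex.I) • ContinuousLinearMap.adjoint (M.ΓsRs (starRingEnd ℂ σ)) (M.ΓsRs ν h)
        + M.Rs ν h - M.R σ h := by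
  have hσc : 0 < (starRingEnd ℂ σ).im := by simpa using hσ
  apply ext_inner_left ℂ
  intro k
  set u : M.A.adjoint.domain := ⟨M.Rs ν h, M.Rs_mem ν hν h⟩ with hudef
  set v : M.A.adjoint.domain := ⟨M.Rs (starRingEnd ℂ σ) k, M.Rs_mem _ hσc k⟩ with hvdef
  have ls := M.lagrange_star u v
  have hAu : M.A.adjoint u = h + ν • M.Rs ν h := by
    linear_combination (norm := module) M.Rs_right ν hν h
  have hAv : M.A.adjoint v = k + (starRingEnd ℂ σ) • M.Rs (starRingEnd ℂ σ) k := by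
    linear_combination (norm := module) M.Rs_right _ hσc k
  have hGu : M.Γs u = M.ΓsRs ν h := (M.ΓsRs_spec ν hν h).symm
  have hGv : M.Γs v = M.ΓsRs (starRingEnd ℂ σ) k := (M.ΓsRs_spec _ hσc k).symm
  have hu : (u : H) = M.Rs ν h := rfl
  have hv : (v : H) = M.Rs (starRingEnd ℂ σ) k := rfl
  rw [hAu, hAv, hGu, hGv, hu, hv] at ls
  have pair1 : ∀ y : H, ⟪M.Rs (starRingEnd ℂ σ) k, y⟫ = ⟪k, M.R σ y⟫ := by
    intro y
    have : M.R σ = ContinuousLinearMap.adjoint (M.Rs (starRingEnd ℂ σ)) := by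
      rw [M.Rs_adj hσc, Complex.conj_conj]
    rw [this, ContinuousLinearMap.adjoint_inner_right]
  have pair2 : ⟪M.ΓsRs (starRingEnd ℂ σ) k, M.ΓsRs ν h⟫
      = ⟪k, ContinuousLinearMap.adjoint (M.ΓsRs (starRingEnd ℂ σ)) (M.ΓsRs ν h)⟫ :=
    (ContinuousLinearMap.adjoint_inner_right _ _ _).symm
  rw [inner_add_right, inner_smul_right, inner_add_left, inner_smul_left,
    Complex.conj_conj, pair1, pair1, pair2] at ls
  rw [inner_smul_right, inner_sub_right, inner_add_right, inner_smul_right]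
  linear_combination ls

/-- Cross identity from the Lagrange identity for `Γ`. -/
theorem cross_A {z τ : ℂ} (hz : z.im < 0) (hτ : 0 < τ.im) (h : H) :
    (z - τ) • M.Rs τ (M.R z h) =
      Complex.I • ContinuousLinearMap.adjoint (M.ΓR (starRingEnd ℂ τ)) (M.ΓR z h)
        - M.Rs τ h + M.R z h := by
  have hτc : (starRingEnd ℂ τ).im < 0 := by simpa using hτ
  apply ext_inner_left ℂ
  intro k
  set u : M.A.domain := ⟨M.R z h, M.R_mem z hz h⟩ with hudef
  set v : M.A.domain := ⟨M.R (starRingEnd ℂ τ) k, M.R_mem _ hτc k⟩ with hvdef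
  have ls := M.lagrange u v
  have hAu : M.A u = h + z • M.R z h := by
    linear_combination (norm := module) M.R_right z hz h
  have hAv : M.A v = k + (starRingEnd ℂ τ) • M.R (starRingEnd ℂ τ) k := by
    linear_combination (norm := module) M.R_right _ hτc k
  have hGu : M.Γ u = M.ΓR z h := (M.ΓR_spec z hz h).symm
  have hGv : M.Γ v = M.ΓR (starRingEnd ℂ τ) k := (M.ΓR_spec _ hτc k).symm
  have hu : (u : H) = M.R z h := rfl
  have hv : (v : H) = M.R (starRingEnd ℂ τ) k := rfl
  rw [hAu, hAv, hGu, hGv, hu, hv] at ls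
  have pair1 : ∀ y : H, ⟪M.R (starRingEnd ℂ τ) k, y⟫ = ⟪k, M.Rs τ y⟫ := by
    intro y
    have : M.Rs τ = ContinuousLinearMap.adjoint (M.R (starRingEnd ℂ τ)) := by
      rw [M.R_adj hτc, Complex.conj_conj]
    rw [this, ContinuousLinearMap.adjoint_inner_right]
  have pair2 : ⟪M.ΓR (starRingEnd ℂ τ) k, M.ΓR z h⟫
      = ⟪k, ContinuousLinearMap.adjoint (M.ΓR (starRingEnd ℂ τ)) (M.ΓR z h)⟫ :=
    (ContinuousLinearMap.adjoint_inner_right _ _ _).symm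
  rw [inner_add_right, inner_smul_right, inner_add_left, inner_smul_left,
    Complex.conj_conj, pair1, pair1, pair2] at ls
  rw [inner_smul_right, inner_add_right, inner_sub_right, inner_smul_right]
  linear_combination ls


theorem aux_sq {H : Type*} [NormedAddCommGroup H] [InnerProductSpace ℂ H]
    (a u : H) (l : ℂ) (hd : 0 ≤ l.im * (⟪a, u⟫).im) :
    l.im ^ 2 * ‖u‖ ^ 2 ≤ ‖a - l • u‖ ^ 2 := by
  have h1 := @norm_sub_sq ℂ _ _ _ _ a (l • u)
  have h2 := @norm_sub_sq ℂ _ _ _ _ a ((l.re : ℂ) • u)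
  rw [inner_smul_right] at h1 h2
  rw [norm_smul] at h1 h2
  simp only [RCLike.re_to_complex, Complex.mul_re, Complex.ofReal_re, Complex.ofReal_im,
    Complex.norm_real, Real.norm_eq_abs] at h1 h2
  have hn : 0 ≤ ‖a - (l.re : ℂ) • u‖ ^ 2 := sq_nonneg _
  have habs : ‖l‖ ^ 2 = l.re ^ 2 + l.im ^ 2 := by
    rw [Complex.sq_norm, Complex.normSq_apply]; ring
  nlinarith [sq_nonneg (|l.re| * ‖u‖), sq_abs l.re]

theorem sqrt_step {a b : ℝ} (ha : 0 ≤ a) (hb : 0 ≤ b) (h : a ^ 2 ≤ b ^ 2) : a ≤ b := by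
  have := Real.sqrt_le_sqrt h
  rwa [Real.sqrt_sq ha, Real.sqrt_sq hb] at this

theorem Rs_bound {l : ℂ} (hl : 0 < l.im) (h : H) :
    l.im * ‖M.Rs l h‖ ≤ ‖h‖ := by
  set u : M.A.adjoint.domain := ⟨M.Rs l h, M.Rs_mem l hl h⟩ with hudef
  have hr : M.A.adjoint u - l • M.Rs l h = h := M.Rs_right l hl h
  have him : 0 ≤ l.im * (⟪M.A.adjoint u, (u : H)⟫).im := by
    have h2 := M.anti_dissipative_star u
    have : (⟪M.A.adjoint u, (u : H)⟫).im = -(⟪(u : H), M.A.adjoint u⟫).im := by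
      rw [← inner_conj_symm, Complex.conj_im]
    rw [this]
    have : 0 ≤ -(⟪(u : H), M.A.adjoint u⟫).im := by linarith
    positivity
  have key := aux_sq (M.A.adjoint u) ((u : H)) l him
  have hu : (u : H) = M.Rs l h := rfl
  rw [hu] at key
  rw [hr] at key
  have : (l.im * ‖M.Rs l h‖) ^ 2 ≤ ‖h‖ ^ 2 := by
    calc (l.im * ‖M.Rs l h‖) ^ 2 = l.im ^ 2 * ‖M.Rs l h‖ ^ 2 := by ring
    _ ≤ ‖h‖ ^ 2 := key
  exact sqrt_step (by positivity) (norm_nonneg _) this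

theorem R_bound {l : ℂ} (hl : l.im < 0) (h : H) :
    (-l.im) * ‖M.R l h‖ ≤ ‖h‖ := by
  set u : M.A.domain := ⟨M.R l h, M.R_mem l hl h⟩ with hudef
  have hr : M.A u - l • M.R l h = h := M.R_right l hl h
  have him : 0 ≤ l.im * (⟪M.A u, (u : H)⟫).im := by
    have h2 := M.dissipative u
    have : (⟪M.A u, (u : H)⟫).im = -(⟪(u : H), M.A u⟫).im := by
      rw [← inner_conj_symm, Complex.conj_im]
    rw [this]
    have h3 : l.im * -(⟪(u : H), M.A u⟫).im = (-l.im) * (⟪(u : H), M.A u⟫).im := by ring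
    rw [h3]
    have : 0 ≤ -l.im := by linarith
    positivity
  have key := aux_sq (M.A u) ((u : H)) l him
  have hu : (u : H) = M.R l h := rfl
  rw [hu] at key
  rw [hr] at key
  have : ((-l.im) * ‖M.R l h‖) ^ 2 ≤ ‖h‖ ^ 2 := by
    calc ((-l.im) * ‖M.R l h‖) ^ 2 = l.im ^ 2 * ‖M.R l h‖ ^ 2 := by ring
    _ ≤ ‖h‖ ^ 2 := key
  refine sqrt_step ?_ (norm_nonneg _) this
  have : 0 ≤ -l.im := by linarith
  positivity


end StrausSetting

/-- The set `M(λ', λ'') = Ran((Γ(A + λ')⁻¹)*) ∪ Ran((Γ_*(A* - λ'')⁻¹)*) ⊆ H`,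
for `Im λ' > 0` and `Im λ'' > 0`. -/
def StrausSetting.MSet (M : StrausSetting H E Es) (l1 l2 : ℂ) : Set H :=
  Set.range (ContinuousLinearMap.adjoint (M.ΓR (-l1)))
    ∪ Set.range (ContinuousLinearMap.adjoint (M.ΓsRs l2))

/-- The closure of
`span{(A - μ)⁻¹ x : Im μ < 0, x ∈ M(λ', λ'')} + span{(A* - λ)⁻¹ x : Im λ > 0, x ∈ M(λ', λ'')}`. -/
noncomputable def StrausSetting.cnsSubspace (M : StrausSetting H E Es) (l1 l2 : ℂ) :
    Submodule ℂ H :=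
  (Submodule.span ℂ
    ({y | ∃ (mu : ℂ) (x : H), mu.im < 0 ∧ x ∈ M.MSet l1 l2 ∧ y = M.R mu x}
      ∪ {y | ∃ (lam : ℂ) (x : H), 0 < lam.im ∧ x ∈ M.MSet l1 l2 ∧
          y = M.Rs lam x})).topologicalClosure

namespace StrausSetting
variable (M : StrausSetting H E Es)

theorem cns_isClosed (l1 l2 : ℂ) : IsClosed ((M.cnsSubspace l1 l2 : Submodule ℂ H) : Set H) :=
  Submodule.isClosed_topologicalClosure _

theorem gen_R_mem {l1 l2 mu : ℂ} {x : H} (hmu : mu.im < 0) (hx : x ∈ M.MSet l1 l2) :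
    M.R mu x ∈ M.cnsSubspace l1 l2 :=
  Submodule.le_topologicalClosure _
    (Submodule.subset_span (Or.inl ⟨mu, x, hmu, hx, rfl⟩))

theorem gen_Rs_mem {l1 l2 lam : ℂ} {x : H} (hlam : 0 < lam.im) (hx : x ∈ M.MSet l1 l2) :
    M.Rs lam x ∈ M.cnsSubspace l1 l2 :=
  Submodule.le_topologicalClosure _
    (Submodule.subset_span (Or.inr ⟨lam, x, hlam, hx, rfl⟩))

theorem mem_of_approx {N : Submodule ℂ H} (hN : IsClosed (N : Set H)) (x : H)
    (h : ∀ ε > (0:ℝ), ∃ y ∈ N, ‖x - y‖ < ε) : x ∈ N := by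
  have hx : x ∈ closure (N : Set H) := by
    rw [Metric.mem_closure_iff]
    intro ε hε
    obtain ⟨y, hy, hlt⟩ := h ε hε
    exact ⟨y, hy, by rwa [dist_eq_norm]⟩
  rwa [hN.closure_eq] at hx

/-- Every element of `M(λ',λ'')` lies in the associated closed subspace. -/
theorem MSet_mem_cns {l1 l2 : ℂ} {x : H} (hx : x ∈ M.MSet l1 l2) :
    x ∈ M.cnsSubspace l1 l2 := by
  apply mem_of_approx (M.cns_isClosed l1 l2)
  intro ε hε
  have hd : x ∈ closure (M.A.adjoint.domain : Set H) := M.dense_dom_star x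
  rw [Metric.mem_closure_iff] at hd
  obtain ⟨w, hw, hwx⟩ := hd (ε/3) (by positivity)
  rw [dist_eq_norm] at hwx
  set u : M.A.adjoint.domain := ⟨w, hw⟩ with hudef
  set a : H := M.A.adjoint u with hadef
  set t : ℝ := 3 * (‖a‖ + 1) / ε with htdef
  have ht : 0 < t := by positivity
  have htim : 0 < ((t:ℂ) * Complex.I).im := by simpa using ht
  refine ⟨(-(t:ℂ) * Complex.I) • M.Rs ((t:ℂ) * Complex.I) x, ?_, ?_⟩
  · exact Submodule.smul_mem _ _ (M.gen_Rs_mem htim hx)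
  · set z : ℂ := (t:ℂ) * Complex.I with hzdef
    have hnz : ‖z‖ = t := by
      rw [hzdef, norm_mul, Complex.norm_I, mul_one, Complex.norm_real,
        Real.norm_eq_abs, abs_of_pos ht]
    have hkey : x - (-(t:ℂ) * Complex.I) • M.Rs z x
        = (x - w) + z • M.Rs z (x - w) + M.Rs z a := by
      have hleft := M.Rs_left z htim u
      have h1 : M.Rs z a = w + z • M.Rs z w := by
        have : M.Rs z (a - z • w) = w := hleft
        rw [map_sub, map_smul] at this
        linear_combination (norm := module) this
      rw [map_sub, h1]
      module
    rw [hkey]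
    have b1 : ‖x - w‖ < ε/3 := hwx
    have b2 : ‖z • M.Rs z (x - w)‖ ≤ ‖x - w‖ := by
      rw [norm_smul, hnz]
      have h5 := M.Rs_bound htim (x - w)
      have him : z.im = t := by simp [hzdef]
      rw [him] at h5
      exact h5
    have b3 : ‖M.Rs z a‖ < ε/3 := by
      have := M.Rs_bound htim a
      have him : ((t:ℂ) * Complex.I).im = t := by simp
      rw [him] at this
      -- t * ‖Rs z a‖ ≤ ‖a‖, with t = 3(‖a‖+1)/ε
      have hRa : ‖M.Rs z a‖ ≤ ‖a‖ / t := by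
        rw [le_div_iff₀ ht]; linarith
      have : ‖a‖ / t < ε / 3 := by
        rw [htdef, div_div_eq_mul_div]
        rw [div_lt_div_iff₀ (by positivity) (by norm_num)]
        ring_nf
        nlinarith [norm_nonneg a]
      linarith
    calc ‖x - w + z • M.Rs z (x - w) + M.Rs z a‖
        ≤ ‖x - w‖ + ‖z • M.Rs z (x - w)‖ + ‖M.Rs z a‖ := norm_add₃_le
      _ < ε/3 + ε/3 + ε/3 := by
          have : ‖z • M.Rs z (x - w)‖ < ε / 3 := lt_of_le_of_lt b2 b1
          linarith
      _ = ε := by ring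


/-- `R μ (R σ x)` is in the subspace for `x ∈ MSet`. -/
theorem cns_R_R {l1 l2 mu sg : ℂ} {x : H} (hmu : mu.im < 0) (hsg : sg.im < 0)
    (hx : x ∈ M.MSet l1 l2) : M.R mu (M.R sg x) ∈ M.cnsSubspace l1 l2 := by
  by_cases hne : mu = sg
  · subst hne
    apply mem_of_approx (M.cns_isClosed l1 l2)
    intro ε hε
    set c : ℝ := ‖M.R mu (M.R mu x)‖ with hcdef
    set d : ℝ := ε * (-mu.im) / (2 * (c + 1)) with hddef
    have hmu' : 0 < -mu.im := by linarith
    have hd : 0 < d := by positivity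
    have him : (mu + (d:ℂ)).im = mu.im := by simp
    have him' : (mu + (d:ℂ)).im < 0 := by rw [him]; exact hmu
    refine ⟨M.R (mu + (d:ℂ)) (M.R mu x), ?_, ?_⟩
    · have hres := M.res_R him' hmu x
      have hne2 : (mu + (d:ℂ)) - mu ≠ 0 := by
        simp only [add_sub_cancel_left, ne_eq, Complex.ofReal_eq_zero]
        exact hd.ne'
      have hexp : M.R (mu + (d:ℂ)) (M.R mu x)
          = ((mu + (d:ℂ)) - mu)⁻¹ • (M.R (mu + (d:ℂ)) x - M.R mu x) := by
        rw [hres, smul_smul, inv_mul_cancel₀ hne2, one_smul]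
      rw [hexp]
      exact Submodule.smul_mem _ _
        (Submodule.sub_mem _ (M.gen_R_mem him' hx) (M.gen_R_mem hmu hx))
    · have hres := M.res_R him' hmu (M.R mu x)
      have heq : M.R mu (M.R mu x) - M.R (mu + (d:ℂ)) (M.R mu x)
          = (-(d:ℂ)) • M.R (mu + (d:ℂ)) (M.R mu (M.R mu x)) := by
        rw [← neg_sub (M.R (mu + (d:ℂ)) (M.R mu x)), hres]
        simp only [add_sub_cancel_left]
        module
      rw [heq, norm_smul]
      have hb := M.R_bound him' (M.R mu (M.R mu x))
      rw [him] at hb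
      have hnd : ‖-(d:ℂ)‖ = d := by
        rw [norm_neg, Complex.norm_real, Real.norm_eq_abs, abs_of_pos hd]
      rw [hnd]
      have hR : ‖M.R (mu + (d:ℂ)) (M.R mu (M.R mu x))‖ ≤ c / (-mu.im) := by
        rw [le_div_iff₀ hmu']
        linarith
      have : d * ‖M.R (mu + (d:ℂ)) (M.R mu (M.R mu x))‖ ≤ d * (c / (-mu.im)) :=
        mul_le_mul_of_nonneg_left hR hd.le
      have hm : mu.im ≠ 0 := ne_of_lt hmu
      have hc1 : c + 1 ≠ 0 := by positivity
      have h2 : d * (c / (-mu.im)) = ε * c / (2 * (c + 1)) := by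
        rw [hddef]
        field_simp
      have hcn : 0 ≤ c := norm_nonneg _
      have h3 : ε * c / (2 * (c + 1)) < ε := by
        rw [div_lt_iff₀ (by positivity)]
        nlinarith
      linarith
  · have hres := M.res_R hmu hsg x
    have hne2 : mu - sg ≠ 0 := sub_ne_zero_of_ne hne
    have hexp : M.R mu (M.R sg x) = (mu - sg)⁻¹ • (M.R mu x - M.R sg x) := by
      rw [hres, smul_smul, inv_mul_cancel₀ hne2, one_smul]
    rw [hexp]
    exact Submodule.smul_mem _ _
      (Submodule.sub_mem _ (M.gen_R_mem hmu hx) (M.gen_R_mem hsg hx))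

/-- `Rs λ (Rs ν x)` is in the subspace for `x ∈ MSet`. -/
theorem cns_Rs_Rs {l1 l2 lam nu : ℂ} {x : H} (hlam : 0 < lam.im) (hnu : 0 < nu.im)
    (hx : x ∈ M.MSet l1 l2) : M.Rs lam (M.Rs nu x) ∈ M.cnsSubspace l1 l2 := by
  by_cases hne : lam = nu
  · subst hne
    apply mem_of_approx (M.cns_isClosed l1 l2)
    intro ε hε
    set c : ℝ := ‖M.Rs lam (M.Rs lam x)‖ with hcdef
    set d : ℝ := ε * lam.im / (2 * (c + 1)) with hddef
    have hd : 0 < d := by positivity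
    have him : (lam + (d:ℂ)).im = lam.im := by simp
    have him' : 0 < (lam + (d:ℂ)).im := by rw [him]; exact hlam
    refine ⟨M.Rs (lam + (d:ℂ)) (M.Rs lam x), ?_, ?_⟩
    · have hres := M.res_Rs him' hlam x
      have hne2 : (lam + (d:ℂ)) - lam ≠ 0 := by
        simp only [add_sub_cancel_left, ne_eq, Complex.ofReal_eq_zero]
        exact hd.ne'
      have hexp : M.Rs (lam + (d:ℂ)) (M.Rs lam x)
          = ((lam + (d:ℂ)) - lam)⁻¹ • (M.Rs (lam + (d:ℂ)) x - M.Rs lam x) := by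
        rw [hres, smul_smul, inv_mul_cancel₀ hne2, one_smul]
      rw [hexp]
      exact Submodule.smul_mem _ _
        (Submodule.sub_mem _ (M.gen_Rs_mem him' hx) (M.gen_Rs_mem hlam hx))
    · have hres := M.res_Rs him' hlam (M.Rs lam x)
      have heq : M.Rs lam (M.Rs lam x) - M.Rs (lam + (d:ℂ)) (M.Rs lam x)
          = (-(d:ℂ)) • M.Rs (lam + (d:ℂ)) (M.Rs lam (M.Rs lam x)) := by
        rw [← neg_sub (M.Rs (lam + (d:ℂ)) (M.Rs lam x)), hres]
        simp only [add_sub_cancel_left]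
        module
      rw [heq, norm_smul]
      have hb := M.Rs_bound him' (M.Rs lam (M.Rs lam x))
      rw [him] at hb
      have hnd : ‖-(d:ℂ)‖ = d := by
        rw [norm_neg, Complex.norm_real, Real.norm_eq_abs, abs_of_pos hd]
      rw [hnd]
      have hR : ‖M.Rs (lam + (d:ℂ)) (M.Rs lam (M.Rs lam x))‖ ≤ c / lam.im := by
        rw [le_div_iff₀ hlam]
        linarith
      have : d * ‖M.Rs (lam + (d:ℂ)) (M.Rs lam (M.Rs lam x))‖ ≤ d * (c / lam.im) :=
        mul_le_mul_of_nonneg_left hR hd.le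
      have hm : lam.im ≠ 0 := ne_of_gt hlam
      have hc1 : c + 1 ≠ 0 := by positivity
      have h2 : d * (c / lam.im) = ε * c / (2 * (c + 1)) := by
        rw [hddef]
        field_simp
      have hcn : 0 ≤ c := norm_nonneg _
      have h3 : ε * c / (2 * (c + 1)) < ε := by
        rw [div_lt_iff₀ (by positivity)]
        nlinarith
      linarith
  · have hres := M.res_Rs hlam hnu x
    have hne2 : lam - nu ≠ 0 := sub_ne_zero_of_ne hne
    have hexp : M.Rs lam (M.Rs nu x) = (lam - nu)⁻¹ • (M.Rs lam x - M.Rs nu x) := by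
      rw [hres, smul_smul, inv_mul_cancel₀ hne2, one_smul]
    rw [hexp]
    exact Submodule.smul_mem _ _
      (Submodule.sub_mem _ (M.gen_Rs_mem hlam hx) (M.gen_Rs_mem hnu hx))

/-- The range of `(ΓR z)*` is in the subspace, provided `Im l1 > 0`. -/
theorem cns_adjGR {l1 l2 z : ℂ} (h1 : 0 < l1.im) (hz : z.im < 0) (e : E) :
    ContinuousLinearMap.adjoint (M.ΓR z) e ∈ M.cnsSubspace l1 l2 := by
  have hl1 : (-l1).im < 0 := by simpa using h1
  have hzc : 0 < (starRingEnd ℂ z).im := by simpa using hz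
  rw [M.GR_adj_rel hz hl1 e]
  set x0 : H := ContinuousLinearMap.adjoint (M.ΓR (-l1)) e with hx0
  have hx0m : x0 ∈ M.MSet l1 l2 := Or.inl ⟨e, rfl⟩
  exact Submodule.add_mem _ (M.MSet_mem_cns hx0m)
    (Submodule.smul_mem _ _ (M.gen_Rs_mem hzc hx0m))

/-- The range of `(ΓsRs w)*` is in the subspace, provided `Im l2 > 0`. -/
theorem cns_adjGsRs {l1 l2 w : ℂ} (h2 : 0 < l2.im) (hw : 0 < w.im) (f : Es) :
    ContinuousLinearMap.adjoint (M.ΓsRs w) f ∈ M.cnsSubspace l1 l2 := by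
  have hwc : (starRingEnd ℂ w).im < 0 := by simpa using hw
  rw [M.GsRs_adj_rel hw h2 f]
  set x0 : H := ContinuousLinearMap.adjoint (M.ΓsRs l2) f with hx0
  have hx0m : x0 ∈ M.MSet l1 l2 := Or.inr ⟨f, rfl⟩
  exact Submodule.add_mem _ (M.MSet_mem_cns hx0m)
    (Submodule.smul_mem _ _ (M.gen_R_mem hwc hx0m))

/-- `R μ (Rs ν x)` is in the subspace, for `x ∈ MSet` and `Im l2 > 0`. -/
theorem cns_R_Rs {l1 l2 mu nu : ℂ} {x : H} (h2 : 0 < l2.im) (hmu : mu.im < 0)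
    (hnu : 0 < nu.im) (hx : x ∈ M.MSet l1 l2) :
    M.R mu (M.Rs nu x) ∈ M.cnsSubspace l1 l2 := by
  have hcb := M.cross_B hmu hnu x
  have hne : nu - mu ≠ 0 := by
    intro hcon
    have : nu = mu := sub_eq_zero.mp hcon
    rw [this] at hnu; linarith
  have hexp : M.R mu (M.Rs nu x) = (nu - mu)⁻¹ •
      ((-Complex.I) • ContinuousLinearMap.adjoint (M.ΓsRs (starRingEnd ℂ mu)) (M.ΓsRs nu x)
        + M.Rs nu x - M.R mu x) := by
    rw [← hcb, smul_smul, inv_mul_cancel₀ hne, one_smul]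
  rw [hexp]
  have hmuc : 0 < (starRingEnd ℂ mu).im := by simpa using hmu
  refine Submodule.smul_mem _ _ (Submodule.sub_mem _ (Submodule.add_mem _ ?_ ?_) ?_)
  · exact Submodule.smul_mem _ _ (M.cns_adjGsRs h2 hmuc _)
  · exact M.gen_Rs_mem hnu hx
  · exact M.gen_R_mem hmu hx

/-- `Rs τ (R z x)` is in the subspace, for `x ∈ MSet` and `Im l1 > 0`. -/
theorem cns_Rs_R {l1 l2 tau z : ℂ} {x : H} (h1 : 0 < l1.im) (htau : 0 < tau.im)
    (hz : z.im < 0) (hx : x ∈ M.MSet l1 l2) :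
    M.Rs tau (M.R z x) ∈ M.cnsSubspace l1 l2 := by
  have hca := M.cross_A hz htau x
  have hne : z - tau ≠ 0 := by
    intro hcon
    have : z = tau := sub_eq_zero.mp hcon
    rw [this] at hz; linarith
  have hexp : M.Rs tau (M.R z x) = (z - tau)⁻¹ •
      (Complex.I • ContinuousLinearMap.adjoint (M.ΓR (starRingEnd ℂ tau)) (M.ΓR z x)
        - M.Rs tau x + M.R z x) := by
    rw [← hca, smul_smul, inv_mul_cancel₀ hne, one_smul]
  rw [hexp]
  have htauc : (starRingEnd ℂ tau).im < 0 := by simpa using htau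
  refine Submodule.smul_mem _ _ (Submodule.add_mem _ (Submodule.sub_mem _ ?_ ?_) ?_)
  · exact Submodule.smul_mem _ _ (M.cns_adjGR h1 htauc _)
  · exact M.gen_Rs_mem htau hx
  · exact M.gen_R_mem hz hx


theorem cns_le (l1 l2 l1' l2' : ℂ) (h1 : 0 < l1.im) (h2 : 0 < l2.im)
    (h1' : 0 < l1'.im) (h2' : 0 < l2'.im) :
    M.cnsSubspace l1 l2 ≤ M.cnsSubspace l1' l2' := by
  have step : Submodule.span ℂ
      ({y | ∃ (mu : ℂ) (x : H), mu.im < 0 ∧ x ∈ M.MSet l1 l2 ∧ y = M.R mu x}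
        ∪ {y | ∃ (lam : ℂ) (x : H), 0 < lam.im ∧ x ∈ M.MSet l1 l2 ∧
            y = M.Rs lam x}) ≤ M.cnsSubspace l1' l2' := by
    rw [Submodule.span_le]
    have hl1 : (-l1).im < 0 := by simpa using h1
    have hl1' : (-l1').im < 0 := by simpa using h1'
    have hnu : 0 < (starRingEnd ℂ (-l1)).im := by simpa using h1
    have hsg : (starRingEnd ℂ l2).im < 0 := by simpa using h2
    rintro y (⟨mu, x, hmu, hx, rfl⟩ | ⟨lam, x, hlam, hx, rfl⟩)
    · rcases hx with ⟨e, rfl⟩ | ⟨f, rfl⟩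
      · rw [SetLike.mem_coe, M.GR_adj_rel hl1 hl1' e, map_add, map_smul]
        have hx0m : ContinuousLinearMap.adjoint (M.ΓR (-l1')) e ∈ M.MSet l1' l2' :=
          Or.inl ⟨e, rfl⟩
        exact Submodule.add_mem _ (M.gen_R_mem hmu hx0m)
          (Submodule.smul_mem _ _ (M.cns_R_Rs h2' hmu hnu hx0m))
      · rw [SetLike.mem_coe, M.GsRs_adj_rel h2 h2' f, map_add, map_smul]
        have hx0m : ContinuousLinearMap.adjoint (M.ΓsRs l2') f ∈ M.MSet l1' l2' :=
          Or.inr ⟨f, rfl⟩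
        exact Submodule.add_mem _ (M.gen_R_mem hmu hx0m)
          (Submodule.smul_mem _ _ (M.cns_R_R hmu hsg hx0m))
    · rcases hx with ⟨e, rfl⟩ | ⟨f, rfl⟩
      · rw [SetLike.mem_coe, M.GR_adj_rel hl1 hl1' e, map_add, map_smul]
        have hx0m : ContinuousLinearMap.adjoint (M.ΓR (-l1')) e ∈ M.MSet l1' l2' :=
          Or.inl ⟨e, rfl⟩
        exact Submodule.add_mem _ (M.gen_Rs_mem hlam hx0m)
          (Submodule.smul_mem _ _ (M.cns_Rs_Rs hlam hnu hx0m))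
      · rw [SetLike.mem_coe, M.GsRs_adj_rel h2 h2' f, map_add, map_smul]
        have hx0m : ContinuousLinearMap.adjoint (M.ΓsRs l2') f ∈ M.MSet l1' l2' :=
          Or.inr ⟨f, rfl⟩
        exact Submodule.add_mem _ (M.gen_Rs_mem hlam hx0m)
          (Submodule.smul_mem _ _ (M.cns_Rs_R h1' hlam hsg hx0m))
  show (Submodule.span ℂ
      ({y | ∃ (mu : ℂ) (x : H), mu.im < 0 ∧ x ∈ M.MSet l1 l2 ∧ y = M.R mu x}
        ∪ {y | ∃ (lam : ℂ) (x : H), 0 < lam.im ∧ x ∈ M.MSet l1 l2 ∧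
            y = M.Rs lam x})).topologicalClosure ≤ M.cnsSubspace l1' l2'
  exact Submodule.topologicalClosure_minimal _ step (M.cns_isClosed l1' l2')

end StrausSetting

/-- The subspace `cnsSubspace` is independent of the choice of the
parameters `λ', λ''` in the open upper half-plane; in particular it always equals the
subspace formed with `λ' = λ'' = i`. -/
theorem stmt17 (M : StrausSetting H E Es) (l1 l2 : ℂ)
    (h1 : 0 < l1.im) (h2 : 0 < l2.im) :
    M.cnsSubspace l1 l2 = M.cnsSubspace Complex.I Complex.I := by
  have hI : (0:ℝ) < Complex.I.im := by simp
  exact le_antisymm (M.cns_le l1 l2 Complex.I Complex.I h1 h2 hI hI)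
    (M.cns_le Complex.I Complex.I l1 l2 hI hI h1 h2)


end
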